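/- Let A be an invertible symmetric n×n complex matrix lying in a linear subspace L of symmetric matrices, and suppose the variety L^{-1} = closure{K^{-1} : K ∈ L invertible} is tangent at A^{-1} to an affine subspace S + L^⊥ (i.e., they share a nonzero common tangent vector at A^{-1}). Then, applying the inversion map φ(X) = X^{-1}, which is a local isomorphism near invertible matrices, the image φ(L^{-1}) coincides locally with L near A, so L and φ(S + L^⊥) share a common tangent direction at A; in particular, any line ℓ' ⊂ L through A tangent to φ(S + L^⊥) witnesses a non-transverse intersection of the line with φ(S + L^⊥). -/

import Mathlib

open Matrix Set

attribute [local instance] Matrix.linftyOpNormedAddCommGroup Matrix.linftyOpNormedRing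
  Matrix.linftyOpNormedAlgebra

theorem stmt16 (n : ℕ) (A : Matrix (Fin n) (Fin n) ℂ)
    (L : Submodule ℂ (Matrix (Fin n) (Fin n) ℂ))
    (hLsymm : ∀ M ∈ L, M.IsSymm)
    (hA : A ∈ L) (hAunit : IsUnit A) (hAsymm : A.IsSymm)
    (S : Matrix (Fin n) (Fin n) ℂ)
    -- the reciprocal variety `L⁻¹` (closure of the set of inverses of invertible elements
    -- of `L`) and the affine space `S + L^⊥` (orthogonality w.r.t. the trace pairing)
    -- share a nonzero common tangent vector at the point `A⁻¹`
    (htang : ∃ v : Matrix (Fin n) (Fin n) ℂ, v ≠ 0 ∧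
      v ∈ tangentConeAt ℂ (closure {B | ∃ K ∈ L, IsUnit K ∧ B = K⁻¹}) A⁻¹ ∧
      v ∈ tangentConeAt ℂ
        {B | ∃ C : Matrix (Fin n) (Fin n) ℂ,
          (∀ K ∈ L, (C * K).trace = 0) ∧ B = S + C} A⁻¹) :
    -- then `L` and `φ(S + L^⊥)`, the image of `S + L^⊥` under matrix inversion,
    -- share a nonzero common tangent direction at `A`
    ∃ v : Matrix (Fin n) (Fin n) ℂ, v ≠ 0 ∧
      v ∈ tangentConeAt ℂ (L : Set (Matrix (Fin n) (Fin n) ℂ)) A ∧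
      v ∈ tangentConeAt ℂ
        {B | ∃ X : Matrix (Fin n) (Fin n) ℂ,
          (∃ C : Matrix (Fin n) (Fin n) ℂ, (∀ K ∈ L, (C * K).trace = 0) ∧ X = S + C) ∧
          IsUnit X ∧ B = X⁻¹} A := by
  classical
  obtain ⟨v, hv0, hv1, hv2⟩ := htang
  have hAdet : IsUnit A.det := (Matrix.isUnit_iff_isUnit_det A).1 hAunit
  have hAinvinv : A⁻¹⁻¹ = A := Matrix.nonsing_inv_nonsing_inv A hAdet
  have hAinv_unit : IsUnit (A⁻¹) := Matrix.isUnit_nonsing_inv_iff.2 hAunit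
  set u : (Matrix (Fin n) (Fin n) ℂ)ˣ := hAinv_unit.unit with hu_def
  have hu : (u : Matrix (Fin n) (Fin n) ℂ) = A⁻¹ := hAinv_unit.unit_spec
  have hu_inv : ((u⁻¹ : (Matrix (Fin n) (Fin n) ℂ)ˣ) : Matrix (Fin n) (Fin n) ℂ) = A := by
    rw [← Ring.inverse_unit u, hu, ← Matrix.nonsing_inv_eq_ringInverse, hAinvinv]
  -- the derivative of matrix inversion at `A⁻¹`
  set f' : Matrix (Fin n) (Fin n) ℂ →L[ℂ] Matrix (Fin n) (Fin n) ℂ := -(ContinuousLinearMap.mulLeftRight ℂ (Matrix (Fin n) (Fin n) ℂ) A A) with hf'_def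
  have hder : HasFDerivAt Ring.inverse f' A⁻¹ := by
    have h := hasFDerivAt_ringInverse (𝕜 := ℂ) u
    rw [hu, hu_inv] at h
    exact h
  have hf'_apply : ∀ x : Matrix (Fin n) (Fin n) ℂ, f' x = -(A * x * A) := by
    intro x
    rfl
  -- the pushed-forward tangent vector
  set w : Matrix (Fin n) (Fin n) ℂ := f' v with hw_def
  have hRinvAinv : Ring.inverse A⁻¹ = A := by
    rw [← Matrix.nonsing_inv_eq_ringInverse, hAinvinv]
  -- the set of units is an open neighborhood of `A⁻¹`
  set U : Set (Matrix (Fin n) (Fin n) ℂ) := {x | IsUnit x} with hU_def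
  have hUopen : IsOpen U := Units.isOpen
  have hUnhds : U ∈ nhds A⁻¹ := hUopen.mem_nhds hAinv_unit
  -- nonvanishing of `w`
  have hw0 : w ≠ 0 := by
    intro h
    apply hv0
    have hz : A * v * A = 0 := by
      have := hw_def ▸ h
      rw [hf'_apply] at this
      simpa [neg_eq_zero] using this
    have : A⁻¹ * (A * v * A) * A⁻¹ = 0 := by rw [hz]; simp
    rwa [show A * v * A = A * (v * A) from Matrix.mul_assoc A v A,
      Matrix.nonsing_inv_mul_cancel_left A (v * A) hAdet,
      Matrix.mul_nonsing_inv_cancel_right A v hAdet] at this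
  refine ⟨w, hw0, ?_, ?_⟩
  · -- `w` is tangent to `L` at `A`
    have h1 : w ∈ tangentConeAt ℂ
        (Ring.inverse '' (closure {B : Matrix (Fin n) (Fin n) ℂ | ∃ K ∈ L, IsUnit K ∧ B = K⁻¹})) (Ring.inverse A⁻¹) :=
      hder.hasFDerivWithinAt.mapsTo_tangent_cone hv1
    rw [hRinvAinv] at h1
    refine tangentConeAt_mono ?_ h1
    rintro _ ⟨x, hx, rfl⟩
    by_cases hxu : IsUnit x
    · -- inverses of units in the closure stay in `L` since inversion is continuous at units
      have hx' : x ∈ closure ({B : Matrix (Fin n) (Fin n) ℂ | ∃ K ∈ L, IsUnit K ∧ B = K⁻¹} ∩ U) := by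
        have := hUopen.inter_closure (t := {B : Matrix (Fin n) (Fin n) ℂ | ∃ K ∈ L, IsUnit K ∧ B = K⁻¹}) ⟨hxu, hx⟩
        exact closure_mono (by exact fun y hy => ⟨hy.2, hy.1⟩) this
      have hcont : ContinuousWithinAt Ring.inverse
          ({B : Matrix (Fin n) (Fin n) ℂ | ∃ K ∈ L, IsUnit K ∧ B = K⁻¹} ∩ U) x :=
        (NormedRing.inverse_continuousAt hxu.unit).continuousWithinAt
      have hmem : Ring.inverse x ∈
          closure (Ring.inverse '' ({B : Matrix (Fin n) (Fin n) ℂ | ∃ K ∈ L, IsUnit K ∧ B = K⁻¹} ∩ U)) := by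
        have hxu' : x = (hxu.unit : Matrix (Fin n) (Fin n) ℂ) := hxu.unit_spec.symm
        exact hcont.mem_closure_image hx'
      have himg : Ring.inverse '' ({B : Matrix (Fin n) (Fin n) ℂ | ∃ K ∈ L, IsUnit K ∧ B = K⁻¹} ∩ U)
          ⊆ (L : Set (Matrix (Fin n) (Fin n) ℂ)) := by
        rintro _ ⟨y, ⟨⟨K, hK, hKu, rfl⟩, _⟩, rfl⟩
        rw [← Matrix.nonsing_inv_eq_ringInverse,
          Matrix.nonsing_inv_nonsing_inv K ((Matrix.isUnit_iff_isUnit_det K).1 hKu)]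
        exact hK
      have hclosed : IsClosed (L : Set (Matrix (Fin n) (Fin n) ℂ)) := Submodule.closed_of_finiteDimensional L
      exact hclosed.closure_subset (closure_mono himg hmem)
    · rw [Ring.inverse_non_unit _ hxu]
      exact L.zero_mem
  · -- `w` is tangent to `φ(S + L^⊥)` at `A`
    have hv2' : v ∈ tangentConeAt ℂ
        ({B : Matrix (Fin n) (Fin n) ℂ | ∃ C : Matrix (Fin n) (Fin n) ℂ, (∀ K ∈ L, (C * K).trace = 0) ∧ B = S + C} ∩ U) A⁻¹ := by
      rw [tangentConeAt_inter_nhds hUnhds]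
      exact hv2
    have h2 : w ∈ tangentConeAt ℂ
        (Ring.inverse '' ({B : Matrix (Fin n) (Fin n) ℂ | ∃ C : Matrix (Fin n) (Fin n) ℂ, (∀ K ∈ L, (C * K).trace = 0) ∧ B = S + C} ∩ U))
        (Ring.inverse A⁻¹) :=
      hder.hasFDerivWithinAt.mapsTo_tangent_cone hv2'
    rw [hRinvAinv] at h2
    refine tangentConeAt_mono ?_ h2
    rintro _ ⟨x, ⟨⟨C, hC, rfl⟩, hxu⟩, rfl⟩
    exact ⟨S + C, ⟨C, hC, rfl⟩, hxu, (Matrix.nonsing_inv_eq_ringInverse _).symm⟩
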